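/- Let k be a positive integer and a₁,…,a_k nonnegative integers. Let sums(A) be the multiset of all subset sums Σ_{i∈J} a_i over J ⊆ {1,…,k}, and let S = {k + x : x ∈ sums(A)} (a multiset of size 2^k). Then there exists a finite poset of cardinality 2k + Σᵢ aᵢ whose multiset of maximal chain cardinalities equals S. Consequently the lower bound |P| ≥ max(S) + log₂|S| is attained. -/

import Mathlib

open scoped Classical in
/-- The finite set of maximal chains of a finite poset, as finsets. -/
noncomputable def maxChains (α : Type*) [Fintype α] [PartialOrder α] : Finset (Finset α) :=
  Finset.univ.filter (fun s : Finset α => IsMaxChain (· ≤ ·) (s : Set α))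

/-- The multiset of cardinalities of the maximal chains of a finite poset. -/
noncomputable def mcMultiset (α : Type*) [Fintype α] [PartialOrder α] : Multiset ℕ :=
  (maxChains α).val.map Finset.card

namespace LBA

open Finset

/-- Gadget: an antichain of a point and a chain of length `n+1`. -/
abbrev G (n : ℕ) := Unit ⊕ Fin (n+1)

/-- The poset: ordinal sum of the gadgets. -/
abbrev P {k : ℕ} (a : Fin k → ℕ) := Σₗ i : Fin k, G (a i)

lemma mk_le_mk {k : ℕ} {a : Fin k → ℕ} {i : Fin k} {x y : G (a i)} :
    (toLex ⟨i, x⟩ : P a) ≤ toLex ⟨i, y⟩ ↔ x ≤ y := by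
  rw [Sigma.Lex.le_def]
  constructor
  · rintro (h | ⟨h1, h2⟩)
    · exact absurd h (lt_irrefl i)
    · exact h2
  · exact fun h => Or.inr ⟨rfl, h⟩

lemma mk_le_mk_of_lt {k : ℕ} {a : Fin k → ℕ} {i j : Fin k} {x : G (a i)} {y : G (a j)}
    (h : i < j) : (toLex ⟨i, x⟩ : P a) ≤ toLex ⟨j, y⟩ :=
  Sigma.Lex.le_def.mpr (Or.inl h)

lemma isMaxChain_left (n : ℕ) : IsMaxChain (· ≤ ·) ({Sum.inl ()} : Set (G n)) := by
  constructor
  · exact Set.subsingleton_singleton.isChain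
  · intro s hs hsub
    refine Set.Subset.antisymm hsub ?_
    rintro (⟨⟩ | x) hx
    · exact Set.mem_singleton _
    · exfalso
      rcases hs hx (hsub rfl) (by simp) with h | h
      · exact Sum.not_inr_le_inl h
      · exact Sum.not_inl_le_inr h

lemma isMaxChain_right (n : ℕ) :
    IsMaxChain (· ≤ ·) (Set.range (Sum.inr : Fin (n+1) → G n)) := by
  constructor
  · rintro _ ⟨u, rfl⟩ _ ⟨v, rfl⟩ _
    rcases le_total u v with h | h
    · exact Or.inl (Sum.inr_le_inr_iff.mpr h)
    · exact Or.inr (Sum.inr_le_inr_iff.mpr h)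
  · intro s hs hsub
    refine Set.Subset.antisymm hsub ?_
    rintro (⟨⟩ | x) hx
    · exfalso
      rcases hs hx (hsub ⟨0, rfl⟩) (by simp) with h | h
      · exact Sum.not_inl_le_inr h
      · exact Sum.not_inr_le_inl h
    · exact ⟨x, rfl⟩

lemma maxChain_G {n : ℕ} {c : Set (G n)} (h : IsMaxChain (· ≤ ·) c) :
    c = {Sum.inl ()} ∨ c = Set.range Sum.inr := by
  by_cases hl : Sum.inl () ∈ c
  · left
    refine h.2 (isMaxChain_left n).1 ?_
    rintro (⟨⟩ | x) hx
    · exact Set.mem_singleton _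
    · exfalso
      rcases h.1 hx hl (by simp) with h' | h'
      · exact Sum.not_inr_le_inl h'
      · exact Sum.not_inl_le_inr h'
  · right
    refine h.2 (isMaxChain_right n).1 ?_
    rintro (⟨⟩ | x) hx
    · exact absurd hx hl
    · exact ⟨x, rfl⟩

/-- The maximal chain of the gadget selected by a Boolean. -/
def fiberSet (n : ℕ) (b : Bool) : Set (G n) :=
  if b then Set.range Sum.inr else {Sum.inl ()}

lemma isMaxChain_fiberSet (n : ℕ) (b : Bool) : IsMaxChain (· ≤ ·) (fiberSet n b) := by
  cases b
  · exact isMaxChain_left n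
  · exact isMaxChain_right n

/-- The maximal chain of the poset selected by a choice function. -/
def C {k : ℕ} (a : Fin k → ℕ) (f : Fin k → Bool) : Set (P a) :=
  {p | p.2 ∈ fiberSet (a p.1) (f p.1)}

lemma isChain_C {k : ℕ} (a : Fin k → ℕ) (f : Fin k → Bool) : IsChain (· ≤ ·) (C a f) := by
  rintro ⟨i, x⟩ hx ⟨j, y⟩ hy hne
  rcases lt_trichotomy i j with h | rfl | h
  · exact Or.inl (mk_le_mk_of_lt h)
  · have hxy : x ≠ y := fun e => hne (by rw [e])
    rcases (isMaxChain_fiberSet (a i) (f i)).1 hx hy hxy with h | h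
    · exact Or.inl (mk_le_mk.mpr h)
    · exact Or.inr (mk_le_mk.mpr h)
  · exact Or.inr (mk_le_mk_of_lt h)

lemma isMaxChain_C {k : ℕ} (a : Fin k → ℕ) (f : Fin k → Bool) :
    IsMaxChain (· ≤ ·) (C a f) := by
  refine ⟨isChain_C a f, ?_⟩
  intro s hs hsub
  refine Set.Subset.antisymm hsub ?_
  rintro ⟨i, x⟩ hx
  have hins : IsChain (· ≤ ·) (insert x (fiberSet (a i) (f i))) := by
    refine (isMaxChain_fiberSet (a i) (f i)).1.insert ?_
    intro y hy hne
    have hy' : (⟨i, y⟩ : P a) ∈ s := hsub hy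
    have hne' : (⟨i, x⟩ : P a) ≠ ⟨i, y⟩ := fun e => hne (by
      have := (Sigma.mk.inj_iff.mp e).2
      exact eq_of_heq this)
    rcases hs hx hy' hne' with h | h
    · exact Or.inl (mk_le_mk.mp h)
    · exact Or.inr (mk_le_mk.mp h)
  have := (isMaxChain_fiberSet (a i) (f i)).2 hins (Set.subset_insert _ _)
  have hx' : x ∈ fiberSet (a i) (f i) := by rw [this]; exact Set.mem_insert _ _
  exact hx'

open scoped Classical in
lemma maxChain_eq_C {k : ℕ} {a : Fin k → ℕ} {c : Set (P a)}
    (h : IsMaxChain (· ≤ ·) c) : ∃ f : Fin k → Bool, c = C a f := by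
  set cs : ∀ i : Fin k, Set (G (a i)) := fun i => {x | (⟨i, x⟩ : P a) ∈ c} with hcs
  have hmax : ∀ i, IsMaxChain (· ≤ ·) (cs i) := by
    intro i
    constructor
    · intro x hx y hy hne
      have hne' : (⟨i, x⟩ : P a) ≠ ⟨i, y⟩ := fun e => hne (by
        have := (Sigma.mk.inj_iff.mp e).2
        exact eq_of_heq this)
      rcases h.1 hx hy hne' with h' | h'
      · exact Or.inl (mk_le_mk.mp h')
      · exact Or.inr (mk_le_mk.mp h')
    · intro s hs hsub
      have hunion : IsChain (· ≤ ·) (c ∪ (Sigma.mk i '' s)) := by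
        rintro p (hp | ⟨x, hx, rfl⟩) q (hq | ⟨y, hy, rfl⟩) hne
        · exact h.1 hp hq hne
        · -- p ∈ c, q = ⟨i, y⟩
          obtain ⟨j, z⟩ := p
          rcases lt_trichotomy j i with h' | rfl | h'
          · exact Or.inl (mk_le_mk_of_lt h')
          · have hz : z ∈ s := hsub hp
            have hzy : z ≠ y := fun e => hne (by rw [e])
            rcases hs hz hy hzy with h' | h'
            · exact Or.inl (mk_le_mk.mpr h')
            · exact Or.inr (mk_le_mk.mpr h')
          · exact Or.inr (mk_le_mk_of_lt h')
        · obtain ⟨j, z⟩ := q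
          rcases lt_trichotomy i j with h' | rfl | h'
          · exact Or.inl (mk_le_mk_of_lt h')
          · have hz : z ∈ s := hsub hq
            have hxz : x ≠ z := fun e => hne (by rw [e])
            rcases hs hx hz hxz with h' | h'
            · exact Or.inl (mk_le_mk.mpr h')
            · exact Or.inr (mk_le_mk.mpr h')
          · exact Or.inr (mk_le_mk_of_lt h')
        · have hxy : x ≠ y := fun e => hne (by rw [e])
          rcases hs hx hy hxy with h' | h'
          · exact Or.inl (mk_le_mk.mpr h')
          · exact Or.inr (mk_le_mk.mpr h')
      have hc : c = c ∪ (Sigma.mk i '' s) := h.2 hunion Set.subset_union_left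
      refine Set.Subset.antisymm hsub ?_
      intro x hx
      have : (⟨i, x⟩ : P a) ∈ c := by
        rw [hc]; exact Or.inr ⟨x, hx, rfl⟩
      exact this
  set f : Fin k → Bool := fun i => if cs i = {Sum.inl ()} then false else true with hf
  have hfib : ∀ i, fiberSet (a i) (f i) = cs i := by
    intro i
    rcases maxChain_G (hmax i) with h' | h'
    · have hfi : f i = false := by simp only [hf]; rw [if_pos h']
      rw [hfi, h']; simp [fiberSet]
    · have hne : cs i ≠ {Sum.inl ()} := by
        rw [h']
        intro hcontra
        have h0 : (Sum.inr 0 : G (a i)) ∈ Set.range (Sum.inr : Fin (a i + 1) → G (a i)) :=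
          ⟨0, rfl⟩
        rw [hcontra] at h0
        simp at h0
      have hfi : f i = true := by simp only [hf]; rw [if_neg hne]
      rw [hfi, h']; simp [fiberSet]
  refine ⟨f, ?_⟩
  ext ⟨i, x⟩
  show (⟨i, x⟩ : P a) ∈ c ↔ x ∈ fiberSet (a i) (f i)
  rw [hfib i]
  exact Iff.rfl

/-- Finset version of the selected maximal chain of a gadget. -/
def fiberF (n : ℕ) (b : Bool) : Finset (G n) :=
  if b then Finset.univ.map ⟨Sum.inr, Sum.inr_injective⟩ else {Sum.inl ()}

lemma coe_fiberF (n : ℕ) (b : Bool) : (fiberF n b : Set (G n)) = fiberSet n b := by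
  cases b <;> simp [fiberF, fiberSet]

lemma card_fiberF (n : ℕ) (b : Bool) : (fiberF n b).card = if b then n + 1 else 1 := by
  cases b <;> simp [fiberF]

/-- Finset version of the selected maximal chain of the poset. -/
def CF {k : ℕ} (a : Fin k → ℕ) (f : Fin k → Bool) : Finset (P a) :=
  Finset.univ.sigma (fun i => fiberF (a i) (f i))

lemma coe_CF {k : ℕ} (a : Fin k → ℕ) (f : Fin k → Bool) : (CF a f : Set (P a)) = C a f := by
  ext ⟨i, x⟩
  show (⟨i, x⟩ : P a) ∈ CF a f ↔ x ∈ fiberSet (a i) (f i)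
  show (⟨i, x⟩ : (i : Fin k) × G (a i)) ∈ Finset.univ.sigma (fun i => fiberF (a i) (f i)) ↔ _
  rw [Finset.mem_sigma, ← coe_fiberF]
  simp

lemma card_CF {k : ℕ} (a : Fin k → ℕ) (f : Fin k → Bool) :
    (CF a f).card = k + ∑ i ∈ Finset.univ.filter (fun i => f i = true), a i := by
  show (Finset.univ.sigma (fun i => fiberF (a i) (f i)) : Finset ((i : Fin k) × G (a i))).card = _
  rw [Finset.card_sigma, Finset.sum_filter]
  have : ∀ i : Fin k, (fiberF (a i) (f i)).card = (if f i = true then a i else 0) + 1 := by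
    intro i
    rw [card_fiberF]
    cases f i <;> simp
  rw [Finset.sum_congr rfl (fun i _ => this i), Finset.sum_add_distrib]
  simp [Finset.card_univ, add_comm]

lemma CF_injective {k : ℕ} (a : Fin k → ℕ) : Function.Injective (CF a) := by
  intro f g he
  funext i
  have hmem : ∀ h : Fin k → Bool,
      ((⟨i, Sum.inl ()⟩ : P a) ∈ CF a h) ↔ h i = false := by
    intro h
    show (⟨i, Sum.inl ()⟩ : (i : Fin k) × G (a i)) ∈ Finset.univ.sigma (fun i => fiberF (a i) (h i)) ↔ _
    rw [Finset.mem_sigma]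
    cases hh : h i <;> simp [fiberF, hh]
  have key : f i = false ↔ g i = false := by rw [← hmem f, he, hmem g]
  cases hf : f i <;> cases hg : g i <;> simp_all

lemma maxChains_P {k : ℕ} (a : Fin k → ℕ) :
    maxChains (P a) = Finset.image (CF a) Finset.univ := by
  ext s
  simp only [maxChains, Finset.mem_filter, Finset.mem_univ, true_and, Finset.mem_image]
  constructor
  · intro h
    obtain ⟨f, hf⟩ := maxChain_eq_C h
    refine ⟨f, ?_⟩
    apply Finset.coe_injective
    rw [coe_CF, hf]
  · rintro ⟨f, rfl⟩
    rw [coe_CF]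
    exact isMaxChain_C a f

lemma mcMultiset_P {k : ℕ} (a : Fin k → ℕ) :
    mcMultiset (P a) = (Finset.univ : Finset (Fin k → Bool)).val.map
      (fun f => k + ∑ i ∈ Finset.univ.filter (fun i => f i = true), a i) := by
  rw [mcMultiset, maxChains_P,
    Finset.image_val_of_injOn ((CF_injective a).injOn), Multiset.map_map]
  exact Multiset.map_congr rfl (fun f _ => card_CF a f)

/-- Choice functions correspond to subsets. -/
def eqv (k : ℕ) : (Fin k → Bool) ≃ Finset (Fin k) where
  toFun f := Finset.univ.filter (fun i => f i = true)
  invFun J := fun i => decide (i ∈ J)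
  left_inv f := by funext i; simp
  right_inv J := by ext i; simp

end LBA

open LBA in
theorem lower_bound_attained (k : ℕ) (hk : 0 < k) (a : Fin k → ℕ) :
    ∃ (α : Type) (i1 : Fintype α) (i2 : PartialOrder α),
      @Fintype.card α i1 = 2 * k + ∑ i, a i ∧
      @mcMultiset α i1 i2 =
        ((Finset.univ : Finset (Fin k)).powerset.val.map (fun J => k + ∑ i ∈ J, a i)) ∧
      ((2 * k + ∑ i, a i : ℕ) : ℝ) =
        ((k + ∑ i, a i : ℕ) : ℝ) +
          Real.logb 2 (Multiset.card
            (((Finset.univ : Finset (Fin k)).powerset.val.map (fun J => k + ∑ i ∈ J, a i)))) := by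
  refine ⟨P a, inferInstance, inferInstance, ?_, ?_, ?_⟩
  · show Fintype.card (Σ i : Fin k, G (a i)) = 2 * k + ∑ i, a i
    rw [Fintype.card_sigma]
    have : ∀ i : Fin k, Fintype.card (G (a i)) = a i + 2 := by
      intro i; simp [Fintype.card_sum]; omega
    rw [Finset.sum_congr rfl (fun i _ => this i), Finset.sum_add_distrib]
    simp [Finset.card_univ, mul_comm]; omega
  · rw [mcMultiset_P, Finset.powerset_univ]
    have h1 : (Finset.univ : Finset (Finset (Fin k))) =
        Finset.univ.map (eqv k).toEmbedding := (Finset.univ_map_equiv_to_embedding _).symm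
    rw [h1, Finset.map_val, Multiset.map_map]
    rfl
  · have hcard : Multiset.card
        (((Finset.univ : Finset (Fin k)).powerset.val.map
          (fun J => k + ∑ i ∈ J, a i))) = 2 ^ k := by
      rw [Multiset.card_map]
      have : ((Finset.univ : Finset (Fin k)).powerset).card = 2 ^ k := by
        rw [Finset.card_powerset, Finset.card_univ, Fintype.card_fin]
      exact this
    rw [hcard]
    have : ((2 ^ k : ℕ) : ℝ) = (2 : ℝ) ^ k := by push_cast; ring
    rw [this, Real.logb_pow, Real.logb_self_eq_one (by norm_num)]
    push_cast
    ring
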